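/- For each positive integer k there exist a constant c > 0 and an integer n0 such that for all n ≥ n0: the number of graphs G in (Apex^k F)_n such that for every connected component H of G with the maximum number of vertices the graph G − V(H) contains a cycle, is at most e^{-c n} · |(Apex^k F)_n|. That is, with probability 1 − e^{-Ω(n)}, for a uniformly random graph from (Apex^k F)_n the subgraph induced on the vertices outside a largest component is a forest. -/

import Mathlib

open SimpleGraph Filter Real

def IsBlocker {V : Type*} (G : SimpleGraph V) (B : Set V) : Prop :=
  (G.induce Bᶜ).IsAcyclic

def HasDisjointCycles {V : Type*} (G : SimpleGraph V) (m : ℕ) : Prop :=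
  ∃ c : Fin m → (Σ v : V, G.Walk v v),
    (∀ i, (c i).2.IsCycle) ∧
    ∀ i j, i ≠ j → ∀ v, v ∈ (c i).2.support → v ∉ (c j).2.support

noncomputable def apexCount (n k : ℕ) : ℕ :=
  Nat.card {G : SimpleGraph (Fin n) // ∃ B : Finset (Fin n), B.card ≤ k ∧ IsBlocker G ↑B}

noncomputable def exCount (n k : ℕ) : ℕ :=
  Nat.card {G : SimpleGraph (Fin n) // ¬ HasDisjointCycles G k}

noncomputable def forestCount (n : ℕ) : ℕ :=
  Nat.card {G : SimpleGraph (Fin n) // G.IsAcyclic}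

def IsSpike {V : Type*} (G : SimpleGraph V) (u v : V) : Prop :=
  G.Adj u v ∧ (G.neighborSet u).ncard = 1 ∧ (G.neighborSet v).ncard = 2 ∧
  ¬ ∃ a b c : V, a ≠ b ∧ b ≠ c ∧ a ≠ c ∧ G.Adj a b ∧ G.Adj b c ∧ ¬ G.Adj a c ∧
      (G.connectedComponentMk u).supp = {a, b, c}





section Walks
variable {V : Type*} {G : SimpleGraph V}

/-- There is a cycle of `G` whose support lies inside `A`. -/
def HasCycIn (G : SimpleGraph V) (A : Set V) : Prop :=
  ∃ (v : V) (p : G.Walk v v), p.IsCycle ∧ ∀ x ∈ p.support, x ∈ A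

def homOfInduce (G : SimpleGraph V) (A : Set V) : G.induce A →g G :=
  ⟨Subtype.val, fun h => h⟩

lemma homOfInduce_inj (A : Set V) : Function.Injective (homOfInduce G A) :=
  Subtype.val_injective

def liftWalk {A : Set V} : ∀ {u v : V} (p : G.Walk u v) (hp : ∀ x ∈ p.support, x ∈ A),
    (G.induce A).Walk ⟨u, hp u p.start_mem_support⟩ ⟨v, hp v p.end_mem_support⟩
  | _, _, Walk.nil, _ => Walk.nil
  | _, _, Walk.cons h q, hp =>
      Walk.cons (by exact h) (liftWalk q (fun x hx => hp x (by simp [hx])))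

lemma liftWalk_map {A : Set V} : ∀ {u v : V} (p : G.Walk u v) (hp : ∀ x ∈ p.support, x ∈ A),
    (liftWalk p hp).map (homOfInduce G A) = p
  | _, _, Walk.nil, _ => rfl
  | _, _, Walk.cons h q, hp => by
      simp only [liftWalk, Walk.map_cons]
      exact congrArg _ (liftWalk_map q _)

lemma induce_acyclic_iff {A : Set V} : (G.induce A).IsAcyclic ↔ ¬ HasCycIn G A := by
  constructor
  · rintro hA ⟨v, p, hc, hsupp⟩
    have hq := liftWalk p hsupp
    have : (liftWalk p hsupp).IsCycle := by
      have := liftWalk_map p hsupp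
      have h2 : ((liftWalk p hsupp).map (homOfInduce G A)).IsCycle := by rw [this]; exact hc
      exact (Walk.map_isCycle_iff_of_injective (homOfInduce_inj A)).1 h2
    exact hA _ this
  · intro h
    intro a q hq
    refine h ⟨a, q.map (homOfInduce G A), ?_, ?_⟩
    · exact (Walk.map_isCycle_iff_of_injective (homOfInduce_inj A)).2 hq
    · intro x hx
      replace hx : x ∈ q.support.map (homOfInduce G A) := (Walk.support_map (homOfInduce G A) q) ▸ hx
      obtain ⟨b, _, rfl⟩ := List.mem_map.1 hx
      exact b.2

lemma isBlocker_iff_not_hasCycIn {B : Set V} :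
    IsBlocker G B ↔ ¬ HasCycIn G Bᶜ := induce_acyclic_iff

/-- every cycle meets a blocker -/
lemma blocker_meets_cycle {B : Set V} (hB : IsBlocker G B) {v : V} {p : G.Walk v v}
    (hp : p.IsCycle) : ∃ x ∈ p.support, x ∈ B := by
  by_contra h
  push_neg at h
  exact (isBlocker_iff_not_hasCycIn.1 hB) ⟨v, p, hp, fun x hx => h x hx⟩

lemma reachable_of_mem_support {u v x : V} (p : G.Walk u v) (hx : x ∈ p.support) :
    G.Reachable u x := by
  classical
  exact ⟨p.takeUntil x hx⟩

/-- a set closed under adjacency is closed under reachability -/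
lemma mem_of_closed_reachable {T : Set V} (hT : ∀ u v, u ∈ T → G.Adj u v → v ∈ T)
    {u v : V} (h : G.Reachable u v) (hu : u ∈ T) : v ∈ T := by
  obtain ⟨p⟩ := h
  induction p with
  | nil => exact hu
  | cons h q ih => exact ih (hT _ _ hu h)

end Walks

lemma hasCycIn_def {V : Type*} (G : SimpleGraph V) (A : Set V) :
    HasCycIn G A ↔ ∃ (v : V) (p : G.Walk v v), p.IsCycle ∧ ∀ x ∈ p.support, x ∈ A :=
  Iff.rfl

section AddEdges
variable {V : Type*} {G : SimpleGraph V}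

lemma reach_sup_avoid {E : Set (Sym2 V)} {x : V}
    (hx : ∀ e ∈ E, ∀ y ∈ e, ¬ G.Reachable x y) :
    ∀ {z w : V}, (G ⊔ fromEdgeSet E).Walk z w → G.Reachable x z → G.Reachable x w := by
  intro z w p
  induction p with
  | nil => exact id
  | @cons a b c h q ih =>
    intro hz
    rcases (sup_adj _ _ _ _).1 h with h' | h'
    · exact ih (hz.trans h'.reachable)
    · rw [fromEdgeSet_adj] at h'
      exact absurd hz (hx _ h'.1 a (Sym2.mem_mk_left a b))

lemma reach_sup_single {u v : V} : ∀ {a b : V}, (G ⊔ fromEdgeSet {s(u,v)}).Walk a b →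
    G.Reachable a b ∨ (G.Reachable a u ∧ G.Reachable v b) ∨
      (G.Reachable a v ∧ G.Reachable u b) := by
  intro a b p
  induction p with
  | nil => exact Or.inl (Reachable.refl _)
  | @cons a c b h q ih =>
    rcases (sup_adj _ _ _ _).1 h with h' | h'
    · rcases ih with h1 | ⟨h2, h3⟩ | ⟨h2, h3⟩
      · exact Or.inl (h'.reachable.trans h1)
      · exact Or.inr (Or.inl ⟨h'.reachable.trans h2, h3⟩)
      · exact Or.inr (Or.inr ⟨h'.reachable.trans h2, h3⟩)
    · rw [fromEdgeSet_adj, Set.mem_singleton_iff, Sym2.eq_iff] at h'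
      rcases h'.1 with ⟨rfl, rfl⟩ | ⟨rfl, rfl⟩
      · rcases ih with h1 | ⟨h2, h3⟩ | ⟨h2, h3⟩
        · exact Or.inr (Or.inl ⟨Reachable.refl _, h1⟩)
        · exact Or.inl (h2.symm.trans h3)
        · exact Or.inl h3
      · rcases ih with h1 | ⟨h2, h3⟩ | ⟨h2, h3⟩
        · exact Or.inr (Or.inr ⟨Reachable.refl _, h1⟩)
        · exact Or.inl h3
        · exact Or.inl (h2.symm.trans h3)

lemma isAcyclic_sup_single (hG : G.IsAcyclic) {u v : V} (h : ¬ G.Reachable u v) :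
    (G ⊔ fromEdgeSet {s(u,v)}).IsAcyclic := by
  have hnadj : ¬ G.Adj u v := fun a => h a.reachable
  rw [isAcyclic_iff_forall_adj_isBridge]
  intro x y hxy
  rw [isBridge_iff]
  show ¬ ((G ⊔ fromEdgeSet {s(u,v)}) \ fromEdgeSet {s(x,y)}).Reachable x y
  rcases (sup_adj _ _ _ _).1 hxy with hxyG | hxyE
  · have hb := (isAcyclic_iff_forall_adj_isBridge.1 hG) hxyG
    rw [isBridge_iff] at hb
    have hne2 : s(u,v) ≠ s(x,y) := by
      intro hcontra
      apply hnadj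
      rw [Sym2.eq_iff] at hcontra
      rcases hcontra with ⟨rfl, rfl⟩ | ⟨rfl, rfl⟩
      · exact hxyG
      · exact hxyG.symm
    have hEq : (G ⊔ fromEdgeSet {s(u,v)}) \ fromEdgeSet {s(x,y)}
        = (G \ fromEdgeSet {s(x,y)}) ⊔ fromEdgeSet {s(u,v)} := by
      ext a b
      simp only [sdiff_adj, sup_adj, fromEdgeSet_adj, Set.mem_singleton_iff]
      have key : s(a,b) = s(u,v) → ¬ (s(a,b) = s(x,y)) := by
        intro h1 h2; exact hne2 (h1.symm.trans h2)
      tauto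
    rw [hEq]
    intro hreach
    obtain ⟨p⟩ := hreach
    rcases reach_sup_single p with h1 | ⟨h2, h3⟩ | ⟨h2, h3⟩
    · exact hb h1
    · exact h ((h2.mono sdiff_le).symm.trans (hxyG.reachable.trans (h3.mono sdiff_le).symm))
    · exact h (((h2.mono sdiff_le).symm.trans (hxyG.reachable.trans (h3.mono sdiff_le).symm)).symm)
  · rw [fromEdgeSet_adj, Set.mem_singleton_iff] at hxyE
    have hEq : (G ⊔ fromEdgeSet {s(u,v)}) \ fromEdgeSet {s(x,y)} = G := by
      ext a b
      simp only [sdiff_adj, sup_adj, fromEdgeSet_adj, Set.mem_singleton_iff]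
      constructor
      · rintro ⟨hl | ⟨h1, h2⟩, hr⟩
        · exact hl
        · exact absurd ⟨h1.trans hxyE.1.symm, h2⟩ hr
      · intro hadj
        refine ⟨Or.inl hadj, ?_⟩
        rintro ⟨h1, -⟩
        have : s(a,b) = s(u,v) := h1.trans hxyE.1
        rw [Sym2.eq_iff] at this
        rcases this with ⟨rfl, rfl⟩ | ⟨rfl, rfl⟩
        · exact hnadj hadj
        · exact hnadj hadj.symm
    rw [hEq]
    intro hr
    rw [Sym2.eq_iff] at hxyE
    rcases hxyE.1 with ⟨rfl, rfl⟩ | ⟨rfl, rfl⟩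
    · exact h hr
    · exact h hr.symm

lemma isAcyclic_sup_star {t : ℕ} (s tg : Fin t → V) (hG : G.IsAcyclic)
    (hss : ∀ i j, i ≠ j → ¬ G.Reachable (s i) (s j))
    (hst : ∀ i j, ¬ G.Reachable (s i) (tg j)) :
    (G ⊔ fromEdgeSet (Set.range (fun i => s(s i, tg i)))).IsAcyclic := by
  suffices H : ∀ j : ℕ, j ≤ t →
      (G ⊔ fromEdgeSet ((fun i => s(s i, tg i)) '' {i | (i : ℕ) < j})).IsAcyclic by
    have := H t le_rfl
    have himg : (fun i : Fin t => s(s i, tg i)) '' {i | (i : ℕ) < t} =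
        Set.range (fun i => s(s i, tg i)) := by
      rw [← Set.image_univ]
      have huniv : {i : Fin t | (i : ℕ) < t} = Set.univ := by
        ext i; simp [i.2]
      rw [huniv]
    rwa [himg] at this
  intro j
  induction j with
  | zero =>
    intro _
    have : (fun i : Fin t => s(s i, tg i)) '' {i | (i : ℕ) < 0} = ∅ := by simp
    rw [this]
    simpa using hG
  | succ j ih =>
    intro hj
    have hjt : j < t := hj
    set jf : Fin t := ⟨j, hjt⟩
    have hsplit : (fun i : Fin t => s(s i, tg i)) '' {i | (i : ℕ) < j + 1} =
        ((fun i : Fin t => s(s i, tg i)) '' {i | (i : ℕ) < j}) ∪ {s(s jf, tg jf)} := by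
      ext e
      simp only [Set.mem_image, Set.mem_setOf_eq, Set.mem_union, Set.mem_singleton_iff]
      constructor
      · rintro ⟨i, hi, rfl⟩
        rcases Nat.lt_succ_iff_lt_or_eq.1 hi with h' | h'
        · exact Or.inl ⟨i, h', rfl⟩
        · right; rw [show i = jf from Fin.ext h']
      · rintro (⟨i, hi, rfl⟩ | rfl)
        · exact ⟨i, Nat.lt_succ_of_lt hi, rfl⟩
        · exact ⟨jf, Nat.lt_succ_self j, rfl⟩
    rw [hsplit, fromEdgeSet_union, ← sup_assoc]
    have ihA := ih (le_of_lt hjt)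
    apply isAcyclic_sup_single ihA
    intro hreach
    obtain ⟨p⟩ := hreach
    have havoid : ∀ e ∈ (fun i : Fin t => s(s i, tg i)) '' {i | (i : ℕ) < j},
        ∀ y ∈ e, ¬ G.Reachable (s jf) y := by
      rintro e ⟨i, hi, rfl⟩ y hy
      rw [Sym2.mem_iff] at hy
      rcases hy with rfl | rfl
      · refine hss jf i ?_
        intro hcontra
        rw [← hcontra] at hi
        simp only [Set.mem_setOf_eq] at hi
        exact lt_irrefl j hi
      · exact hst jf i
    have := reach_sup_avoid havoid p (Reachable.refl _)
    exact hst jf jf this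

end AddEdges



section Away
variable {n : ℕ}

def away (G : SimpleGraph (Fin n)) (B : Finset (Fin n)) : SimpleGraph (Fin n) where
  Adj u v := G.Adj u v ∧ u ∉ B ∧ v ∉ B
  symm := ⟨fun u v ⟨h, h1, h2⟩ => ⟨h.symm, h2, h1⟩⟩
  loopless := ⟨fun u ⟨h, _, _⟩ => G.irrefl h⟩

lemma away_le (G : SimpleGraph (Fin n)) (B : Finset (Fin n)) : away G B ≤ G :=
  fun _ _ h => h.1

lemma away_cycle_support {G : SimpleGraph (Fin n)} {B : Finset (Fin n)} :
    ∀ {u v : Fin n} (p : (away G B).Walk u v), ¬ p.Nil → ∀ x ∈ p.support, x ∉ B := by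
  intro u v p
  induction p with
  | nil => intro hnil; simp at hnil
  | @cons a c w h q ih =>
    intro _ x hx
    rw [Walk.support_cons] at hx
    rcases List.mem_cons.1 hx with rfl | hx'
    · exact h.2.1
    · cases q with
      | nil =>
        simp only [Walk.support_nil, List.mem_singleton] at hx'
        subst hx'
        exact h.2.2
      | cons h' q' =>
        exact ih (Walk.not_nil_cons) x hx'

lemma away_acyclic_of_blocker {G : SimpleGraph (Fin n)} {B : Finset (Fin n)}
    (hB : IsBlocker G ↑B) : (away G B).IsAcyclic := by
  intro v p hp
  have hedge : ∀ e ∈ p.edges, e ∈ G.edgeSet := by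
    intro e he
    exact (edgeSet_mono (away_le G B)) (p.edges_subset_edgeSet he)
  apply isBlocker_iff_not_hasCycIn.1 hB
  rw [hasCycIn_def]
  refine ⟨v, p.transfer G hedge, hp.transfer hedge, ?_⟩
  intro x hx
  rw [Walk.support_transfer] at hx
  have : x ∉ B := away_cycle_support p (hp.not_nil) x hx
  simpa using this

lemma isBlocker_of_away_acyclic {G : SimpleGraph (Fin n)} {B : Finset (Fin n)}
    (h : (away G B).IsAcyclic) : IsBlocker G ↑B := by
  rw [isBlocker_iff_not_hasCycIn, hasCycIn_def]
  rintro ⟨v, p, hc, hs⟩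
  have hedge : ∀ e ∈ p.edges, e ∈ (away G B).edgeSet := by
    intro e he
    induction e with
    | h a b =>
      rw [mem_edgeSet]
      refine ⟨p.edges_subset_edgeSet he, ?_, ?_⟩
      · have := hs a (p.fst_mem_support_of_mem_edges he)
        simpa using this
      · have := hs b (p.snd_mem_support_of_mem_edges he)
        simpa using this
  exact h _ (hc.transfer hedge)

/-- away graph unchanged when all new edges touch B -/
lemma away_sup_touch (G : SimpleGraph (Fin n)) (B : Finset (Fin n)) (E : Set (Sym2 (Fin n)))
    (hE : ∀ e ∈ E, ∃ x ∈ e, x ∈ B) : away (G ⊔ fromEdgeSet E) B = away G B := by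
  ext u v
  show (G ⊔ fromEdgeSet E).Adj u v ∧ u ∉ B ∧ v ∉ B ↔ G.Adj u v ∧ u ∉ B ∧ v ∉ B
  simp only [sup_adj, fromEdgeSet_adj]
  constructor
  · rintro ⟨hl | ⟨he, hne⟩, h1, h2⟩
    · exact ⟨hl, h1, h2⟩
    · obtain ⟨x, hx, hxB⟩ := hE _ he
      rw [Sym2.mem_iff] at hx
      rcases hx with rfl | rfl
      · exact absurd hxB h1
      · exact absurd hxB h2
  · rintro ⟨hl, h1, h2⟩
    exact ⟨Or.inl hl, h1, h2⟩

/-- away graph of a sup when new edges avoid B entirely -/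
lemma away_sup_avoid (G : SimpleGraph (Fin n)) (B : Finset (Fin n)) (E : Set (Sym2 (Fin n)))
    (hE : ∀ e ∈ E, ∀ x ∈ e, x ∉ B) :
    away (G ⊔ fromEdgeSet E) B = (away G B) ⊔ fromEdgeSet E := by
  ext u v
  show (G ⊔ fromEdgeSet E).Adj u v ∧ u ∉ B ∧ v ∉ B ↔ (away G B).Adj u v ∨ _
  show _ ↔ (G.Adj u v ∧ u ∉ B ∧ v ∉ B) ∨ (fromEdgeSet E).Adj u v
  simp only [sup_adj, fromEdgeSet_adj]
  constructor
  · rintro ⟨hl | hr, h1, h2⟩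
    · exact Or.inl ⟨hl, h1, h2⟩
    · exact Or.inr hr
  · rintro (⟨hl, h1, h2⟩ | ⟨he, hne⟩)
    · exact ⟨Or.inl hl, h1, h2⟩
    · refine ⟨Or.inr ⟨he, hne⟩, ?_, ?_⟩
      · exact hE _ he u (Sym2.mem_mk_left u v)
      · exact hE _ he v (Sym2.mem_mk_right u v)

end Away

section Rep
variable {n : ℕ}

open scoped Classical in
/-- representative (minimum) of the reachability class of `v` in `H` -/
noncomputable def rp (H : SimpleGraph (Fin n)) (v : Fin n) : Fin n :=
  (Finset.univ.filter (fun w => H.Reachable v w)).min'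
    ⟨v, by
      simp only [Finset.mem_filter, Finset.mem_univ, true_and]
      exact Reachable.refl v⟩

lemma rp_reach (H : SimpleGraph (Fin n)) (v : Fin n) : H.Reachable v (rp H v) := by
  classical
  have h := Finset.min'_mem (Finset.univ.filter (fun w => H.Reachable v w))
    ⟨v, by
      simp only [Finset.mem_filter, Finset.mem_univ, true_and]
      exact Reachable.refl v⟩
  rw [Finset.mem_filter] at h
  exact h.2

lemma rp_eq_of_reach {H : SimpleGraph (Fin n)} {u v : Fin n} (h : H.Reachable u v) :
    rp H u = rp H v := by
  classical
  have hset : Finset.univ.filter (fun w => H.Reachable u w)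
      = Finset.univ.filter (fun w => H.Reachable v w) := by
    ext w
    simp only [Finset.mem_filter, Finset.mem_univ, true_and]
    exact ⟨fun h' => h.symm.trans h', fun h' => h.trans h'⟩
  simp only [rp]
  congr 1

lemma rp_idem (H : SimpleGraph (Fin n)) (v : Fin n) : rp H (rp H v) = rp H v :=
  (rp_eq_of_reach (rp_reach H v)).symm

lemma reach_of_rp_eq {H : SimpleGraph (Fin n)} {u v : Fin n} (h : rp H u = rp H v) :
    H.Reachable u v :=
  (rp_reach H u).trans (h ▸ (rp_reach H v).symm)

/-- the finset of representatives of components avoiding B -/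
noncomputable def WS (H : SimpleGraph (Fin n)) (B : Finset (Fin n)) : Finset (Fin n) := by
  classical
  exact (Finset.univ.filter (fun v => v ∉ B)).image (rp H)

lemma mem_WS {H : SimpleGraph (Fin n)} {B : Finset (Fin n)} {w : Fin n} :
    w ∈ WS H B ↔ ∃ v, v ∉ B ∧ rp H v = w := by
  classical
  simp [WS, Finset.mem_image, Finset.mem_filter]

lemma rp_mem_WS {H : SimpleGraph (Fin n)} {B : Finset (Fin n)} {v : Fin n} (hv : v ∉ B) :
    rp H v ∈ WS H B := mem_WS.2 ⟨v, hv, rfl⟩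

lemma WS_rp_self {H : SimpleGraph (Fin n)} {B : Finset (Fin n)} {w : Fin n} (hw : w ∈ WS H B) :
    rp H w = w := by
  obtain ⟨v, _, rfl⟩ := mem_WS.1 hw
  exact rp_idem H v

lemma WS_not_reach {H : SimpleGraph (Fin n)} {B : Finset (Fin n)} {w₁ w₂ : Fin n}
    (h1 : w₁ ∈ WS H B) (h2 : w₂ ∈ WS H B) (hne : w₁ ≠ w₂) : ¬ H.Reachable w₁ w₂ := by
  intro hr
  apply hne
  rw [← WS_rp_self h1, ← WS_rp_self h2]
  exact rp_eq_of_reach hr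

/-- membership in away-reach implies not in B, for reps of non-B vertices -/
lemma away_reach_notB {G : SimpleGraph (Fin n)} {B : Finset (Fin n)} {v w : Fin n}
    (hv : v ∉ B) (h : (away G B).Reachable v w) : w ∉ B := by
  obtain ⟨p⟩ := h
  induction p with
  | nil => exact hv
  | @cons a c w h q ih => exact ih h.2.2

lemma WS_away_notB {G : SimpleGraph (Fin n)} {B : Finset (Fin n)} {w : Fin n}
    (hw : w ∈ WS (away G B) B) : w ∉ B := by
  obtain ⟨v, hv, rfl⟩ := mem_WS.1 hw
  exact away_reach_notB hv (rp_reach _ v)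

lemma WS_away_not_adj {G : SimpleGraph (Fin n)} {B : Finset (Fin n)} {w₁ w₂ : Fin n}
    (h1 : w₁ ∈ WS (away G B) B) (h2 : w₂ ∈ WS (away G B) B) (hne : w₁ ≠ w₂) :
    ¬ G.Adj w₁ w₂ := by
  intro hadj
  exact WS_not_reach h1 h2 hne (Adj.reachable ⟨hadj, WS_away_notB h1, WS_away_notB h2⟩)

end Rep

section Encode
variable {n k : ℕ}

noncomputable def encodeSmall (k : ℕ) (S : {S : Finset (Fin n) // S.card ≤ k}) :
    Fin k → Fin (n + 1) := fun i =>
  if h : (i : ℕ) < S.1.card then Fin.castSucc ((S.1.orderIsoOfFin rfl ⟨i, h⟩ : {x // x ∈ S.1}) : Fin n)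
  else Fin.last n

lemma encodeSmall_mem_iff (S : {S : Finset (Fin n) // S.card ≤ k}) (v : Fin n) :
    v ∈ S.1 ↔ ∃ i : Fin k, encodeSmall k S i = Fin.castSucc v := by
  constructor
  · intro hv
    obtain ⟨j, hj⟩ := (S.1.orderIsoOfFin rfl).surjective ⟨v, hv⟩
    refine ⟨⟨j, lt_of_lt_of_le j.2 S.2⟩, ?_⟩
    simp only [encodeSmall]
    rw [dif_pos j.2]
    congr 1
    rw [show (⟨(j : ℕ), j.2⟩ : Fin S.1.card) = j from Fin.ext rfl, hj]
  · rintro ⟨i, hi⟩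
    simp only [encodeSmall] at hi
    by_cases h : (i : ℕ) < S.1.card
    · rw [dif_pos h] at hi
      have := Fin.castSucc_injective n hi
      rw [← this]
      exact (S.1.orderIsoOfFin rfl ⟨i, h⟩).2
    · rw [dif_neg h] at hi
      exact absurd hi.symm (Fin.castSucc_lt_last v).ne

lemma encodeSmall_injective : Function.Injective (encodeSmall (n := n) k) := by
  intro S S' h
  apply Subtype.ext
  ext v
  rw [encodeSmall_mem_iff S v, encodeSmall_mem_iff S' v, h]

end Encode

section Extract
variable {n k : ℕ}


instance (G : SimpleGraph (Fin n)) : Finite (G.ConnectedComponent) :=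
  Finite.of_surjective G.connectedComponentMk (fun c => c.exists_rep)

/-- structure extraction for bad graphs -/
lemma exists_struct (hn : 0 < n) (G : SimpleGraph (Fin n))
    (hbad : ∀ H : G.ConnectedComponent,
      (∀ H' : G.ConnectedComponent, H'.supp.ncard ≤ H.supp.ncard) →
      ¬ (G.induce H.suppᶜ).IsAcyclic)
    (B : Finset (Fin n)) (hB : IsBlocker G ↑B) :
    ∃ d : Fin n × Set (Fin n), d.1 ∈ B ∧ d.1 ∈ d.2 ∧
      (∀ u v, u ∈ d.2 → G.Adj u v → v ∈ d.2) ∧ d.2.ncard + d.2.ncard ≤ n := by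
  have hne : Nonempty (Fin n) := ⟨⟨0, hn⟩⟩
  have : Nonempty G.ConnectedComponent := ⟨G.connectedComponentMk hne.some⟩
  obtain ⟨H, hH⟩ := Finite.exists_max (fun H : G.ConnectedComponent => H.supp.ncard)
  have hcyc := hbad H hH
  rw [induce_acyclic_iff, not_not] at hcyc
  obtain ⟨v, p, hpc, hpsupp⟩ := hcyc
  set K := G.connectedComponentMk v with hK
  obtain ⟨b₁, hb₁p, hb₁B⟩ := blocker_meets_cycle hB hpc
  have hsuppK : ∀ x ∈ p.support, x ∈ K.supp := by
    intro x hx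
    rw [ConnectedComponent.mem_supp_iff]
    exact (ConnectedComponent.sound (reachable_of_mem_support p hx)).symm
  refine ⟨(b₁, K.supp), hb₁B, hsuppK b₁ hb₁p, ?_, ?_⟩
  · intro a b ha hadj
    rw [ConnectedComponent.mem_supp_iff] at ha ⊢
    rw [← ha]
    exact ConnectedComponent.sound hadj.reachable.symm
  · have hKH : K ≠ H := by
      intro hcontra
      have hv : v ∈ H.suppᶜ := hpsupp v p.start_mem_support
      apply hv
      rw [← hcontra, ConnectedComponent.mem_supp_iff]
    have hdisj : Disjoint K.supp H.supp := by
      rw [Set.disjoint_left]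
      intro x hx hx'
      rw [ConnectedComponent.mem_supp_iff] at hx hx'
      exact hKH (hx ▸ hx')
    calc K.supp.ncard + K.supp.ncard ≤ K.supp.ncard + H.supp.ncard := by
          exact add_le_add_right (hH K) _
      _ = (K.supp ∪ H.supp).ncard := (Set.ncard_union_eq hdisj (Set.toFinite _) (Set.toFinite _)).symm
      _ ≤ (Set.univ : Set (Fin n)).ncard :=
          Set.ncard_le_ncard (Set.subset_univ _) (Set.toFinite _)
      _ = n := by rw [Set.ncard_univ, Nat.card_eq_fintype_card, Fintype.card_fin]

end Extract


-- placeholders for already-proved lemmas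

section Main
variable (n k : ℕ)

def ApexP (G : SimpleGraph (Fin n)) : Prop :=
  ∃ B : Finset (Fin n), B.card ≤ k ∧ IsBlocker G ↑B

def BadP (G : SimpleGraph (Fin n)) : Prop :=
  ApexP n k G ∧ ∀ H : G.ConnectedComponent,
    (∀ H' : G.ConnectedComponent, H'.supp.ncard ≤ H.supp.ncard) →
    ¬ (G.induce H.suppᶜ).IsAcyclic

abbrev ApexT := {G : SimpleGraph (Fin n) // ApexP n k G}
abbrev BadT := {G : SimpleGraph (Fin n) // BadP n k G}

variable {n k}

noncomputable def bB (G : BadT n k) : Finset (Fin n) := G.2.1.choose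

lemma bB_card (G : BadT n k) : (bB G).card ≤ k := G.2.1.choose_spec.1

lemma bB_blocker (G : BadT n k) : IsBlocker G.1 ↑(bB G) := G.2.1.choose_spec.2

noncomputable def sdat (hn : 0 < n) (G : BadT n k) : Fin n × Set (Fin n) :=
  (exists_struct hn G.1 G.2.2 (bB G) (bB_blocker G)).choose

noncomputable def bOne (hn : 0 < n) (G : BadT n k) : Fin n := (sdat hn G).1
noncomputable def Tst (hn : 0 < n) (G : BadT n k) : Set (Fin n) := (sdat hn G).2

lemma bOne_mem_B (hn : 0 < n) (G : BadT n k) : bOne hn G ∈ bB G :=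
  (exists_struct hn G.1 G.2.2 (bB G) (bB_blocker G)).choose_spec.1
lemma bOne_mem_T (hn : 0 < n) (G : BadT n k) : bOne hn G ∈ Tst hn G :=
  (exists_struct hn G.1 G.2.2 (bB G) (bB_blocker G)).choose_spec.2.1
lemma Tst_closed (hn : 0 < n) (G : BadT n k) :
    ∀ u v, u ∈ Tst hn G → G.1.Adj u v → v ∈ Tst hn G :=
  (exists_struct hn G.1 G.2.2 (bB G) (bB_blocker G)).choose_spec.2.2.1
lemma Tst_card (hn : 0 < n) (G : BadT n k) : (Tst hn G).ncard + (Tst hn G).ncard ≤ n :=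
  (exists_struct hn G.1 G.2.2 (bB G) (bB_blocker G)).choose_spec.2.2.2

lemma Tst_closed_reach (hn : 0 < n) (G : BadT n k) {u v : Fin n}
    (h : G.1.Reachable u v) (hu : u ∈ Tst hn G) : v ∈ Tst hn G :=
  mem_of_closed_reachable (Tst_closed hn G) h hu

lemma Tst_mem_iff_of_adj (hn : 0 < n) (G : BadT n k) {u v : Fin n} (h : G.1.Adj u v) :
    u ∈ Tst hn G ↔ v ∈ Tst hn G :=
  ⟨fun hu => Tst_closed hn G u v hu h, fun hv => Tst_closed hn G v u hv h.symm⟩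

/-- the away graph & components data of a bad graph -/
noncomputable def cW (G : BadT n k) : ℕ := (WS (away G.1 (bB G)) (bB G)).card

open scoped Classical in
noncomputable def TCf (hn : 0 < n) (G : BadT n k) : Finset (Fin n) :=
  Finset.univ.filter (fun v => v ∉ Tst hn G)

lemma TCf_card (hn : 0 < n) (G : BadT n k) : n - n / 2 ≤ (TCf hn G).card := by
  classical
  have hsplit := Finset.card_filter_add_card_filter_not
    (s := (Finset.univ : Finset (Fin n))) (p := fun v => v ∈ Tst hn G)
  have hcoe : ((Finset.univ.filter (fun v => v ∈ Tst hn G)) : Set (Fin n)) = Tst hn G := by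
    ext v; simp
  have h2 : (Finset.univ.filter (fun v => v ∈ Tst hn G)).card = (Tst hn G).ncard := by
    rw [← Set.ncard_coe_finset, hcoe]
  have hm : (Tst hn G).ncard ≤ n / 2 := by
    rw [Nat.le_div_iff_mul_le (by norm_num)]
    have := Tst_card hn G
    omega
  have hTC : (TCf hn G).card = n - (Tst hn G).ncard := by
    have hcard : (Finset.univ : Finset (Fin n)).card = n := by simp
    unfold TCf
    omega
  omega

variable (n k) in
/-- domain of the regime II injection -/
abbrev DomII := {G : BadT n k // cW G < 2 * (n / 8 + 1)} × Finset (Fin (n - n / 2))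

variable (n k) in
abbrev TgtII := ApexT n k × (Fin k → Fin (n + 1)) × (Fin k → Fin (n + 1)) × Fin n ×
  (Fin (2 * (n / 8 + 1)) → Prop)

/-- embedding of uniform data into subsets of the complement of T -/
noncomputable def tcEmb (hn : 0 < n) (G : BadT n k) (i : Fin (n - n / 2)) : Fin n :=
  (TCf hn G).orderEmbOfFin rfl (Fin.castLE (TCf_card hn G) i)

lemma tcEmb_not_T (hn : 0 < n) (G : BadT n k) (i : Fin (n - n / 2)) :
    tcEmb hn G i ∉ Tst hn G := by
  classical
  have := (TCf hn G).orderEmbOfFin_mem rfl (Fin.castLE (TCf_card hn G) i)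
  simp only [TCf, Finset.mem_filter] at this
  exact this.2

lemma tcEmb_injective (hn : 0 < n) (G : BadT n k) : Function.Injective (tcEmb hn G) := by
  intro a b h
  have := (TCf hn G).orderEmbOfFin rfl |>.injective h
  exact Fin.castLE_injective _ this

noncomputable def Xf (hn : 0 < n) (G : BadT n k) (X' : Finset (Fin (n - n / 2))) :
    Finset (Fin n) := X'.image (tcEmb hn G)

noncomputable def Ef (hn : 0 < n) (G : BadT n k) (X' : Finset (Fin (n - n / 2))) :
    Set (Sym2 (Fin n)) := (fun x => s(bOne hn G, x)) '' (↑(Xf hn G X') : Set (Fin n))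

noncomputable def GII (hn : 0 < n) (G : BadT n k) (X' : Finset (Fin (n - n / 2))) :
    SimpleGraph (Fin n) := G.1 ⊔ fromEdgeSet (Ef hn G X')

lemma away_GII (hn : 0 < n) (G : BadT n k) (X' : Finset (Fin (n - n / 2))) :
    away (GII hn G X') (bB G) = away G.1 (bB G) := by
  apply away_sup_touch
  rintro e ⟨x, hx, rfl⟩
  exact ⟨bOne hn G, Sym2.mem_mk_left _ _, bOne_mem_B hn G⟩

lemma GII_apex (hn : 0 < n) (G : BadT n k) (X' : Finset (Fin (n - n / 2))) :
    ApexP n k (GII hn G X') := by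
  refine ⟨bB G, bB_card G, ?_⟩
  apply isBlocker_of_away_acyclic
  rw [away_GII]
  exact away_acyclic_of_blocker (bB_blocker G)

noncomputable def BTf (hn : 0 < n) (G : BadT n k) : Finset (Fin n) := by
  classical
  exact (bB G).filter (fun v => v ∈ Tst hn G)

lemma BTf_card (hn : 0 < n) (G : BadT n k) : (BTf hn G).card ≤ k :=
  le_trans (by classical exact Finset.card_filter_le _ _) (bB_card G)

noncomputable def c4f (hn : 0 < n) (G : BadT n k) : Fin (2 * (n / 8 + 1)) → Prop :=
  fun i => ∃ h : (i : ℕ) < cW G,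
    (((WS (away G.1 (bB G)) (bB G)).orderIsoOfFin rfl ⟨i, h⟩ : {x // x ∈ WS (away G.1 (bB G)) (bB G)}) : Fin n) ∈ Tst hn G

noncomputable def PhiII (hn : 0 < n) : DomII n k → TgtII n k := fun p =>
  (⟨GII hn p.1.1 p.2, GII_apex hn p.1.1 p.2⟩,
   encodeSmall k ⟨bB p.1.1, bB_card p.1.1⟩,
   encodeSmall k ⟨BTf hn p.1.1, BTf_card hn p.1.1⟩,
   bOne hn p.1.1,
   c4f hn p.1.1)

/-- decoding of T from the image data -/
noncomputable def decT (A : SimpleGraph (Fin n)) (B BT : Finset (Fin n))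
    (c4 : Fin (2 * (n / 8 + 1)) → Prop) : Set (Fin n) :=
  ↑BT ∪ {v | v ∉ B ∧ ∃ (h1 : rp A v ∈ WS A B)
      (h2 : (((WS A B).orderIsoOfFin rfl).symm ⟨rp A v, h1⟩ : ℕ) < 2 * (n / 8 + 1)),
      c4 ⟨_, h2⟩}

lemma decT_spec (hn : 0 < n) (G : BadT n k) (hreg : cW G < 2 * (n / 8 + 1))
    (X' : Finset (Fin (n - n / 2))) :
    decT (away (GII hn G X') (bB G)) (bB G) (BTf hn G) (c4f hn G) = Tst hn G := by
  rw [away_GII]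
  unfold decT
  ext v
  simp only [Set.mem_union, Finset.coe_sort_coe, Set.mem_setOf_eq, Finset.mem_coe]
  constructor
  · rintro (hBT | ⟨hvB, h1, h2, hc4⟩)
    · classical
      exact (Finset.mem_filter.1 (by simpa [BTf] using hBT)).2
    · obtain ⟨hlt, hmem⟩ := hc4
      -- the W element indexed equals rp v
      have hidx : (⟨((((WS (away G.1 (bB G)) (bB G)).orderIsoOfFin rfl).symm
          ⟨rp (away G.1 (bB G)) v, h1⟩ : Fin _) : ℕ), hlt⟩ : Fin (cW G))
          = ((WS (away G.1 (bB G)) (bB G)).orderIsoOfFin rfl).symm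
            ⟨rp (away G.1 (bB G)) v, h1⟩ := Fin.ext rfl
      simp only [Fin.val_mk, Fin.eta, OrderIso.apply_symm_apply] at hmem
      rw [show ((WS (away G.1 (bB G)) (bB G)).orderIsoOfFin rfl) ⟨_, hlt⟩ = ⟨rp (away G.1 (bB G)) v, h1⟩ from (congrArg (⇑((WS (away G.1 (bB G)) (bB G)).orderIsoOfFin rfl)) (Fin.ext rfl)).trans (OrderIso.apply_symm_apply _ _)] at hmem
      -- hmem : rp v ∈ Tst
      have hreach : G.1.Reachable v (rp (away G.1 (bB G)) v) :=
        Reachable.mono (away_le G.1 (bB G)) (rp_reach _ v)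
      exact Tst_closed_reach hn G hreach.symm hmem
  · intro hvT
    by_cases hvB : v ∈ bB G
    · left
      classical
      simp [BTf, Finset.mem_filter, hvB, hvT]
    · right
      have h1 : rp (away G.1 (bB G)) v ∈ WS (away G.1 (bB G)) (bB G) := rp_mem_WS hvB
      have hlt : ((((WS (away G.1 (bB G)) (bB G)).orderIsoOfFin rfl).symm
          ⟨rp (away G.1 (bB G)) v, h1⟩ : Fin _) : ℕ) < cW G := Fin.is_lt _
      refine ⟨hvB, h1, lt_trans hlt hreg, hlt, ?_⟩
      have hidx : (⟨((((WS (away G.1 (bB G)) (bB G)).orderIsoOfFin rfl).symm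
          ⟨rp (away G.1 (bB G)) v, h1⟩ : Fin _) : ℕ), hlt⟩ : Fin (cW G))
          = ((WS (away G.1 (bB G)) (bB G)).orderIsoOfFin rfl).symm
            ⟨rp (away G.1 (bB G)) v, h1⟩ := Fin.ext rfl
      simp only [Fin.val_mk, Fin.eta, OrderIso.apply_symm_apply]
      rw [show ((WS (away G.1 (bB G)) (bB G)).orderIsoOfFin rfl) ⟨_, hlt⟩ = ⟨rp (away G.1 (bB G)) v, h1⟩ from (congrArg (⇑((WS (away G.1 (bB G)) (bB G)).orderIsoOfFin rfl)) (Fin.ext rfl)).trans (OrderIso.apply_symm_apply _ _)]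
      have hreach : G.1.Reachable v (rp (away G.1 (bB G)) v) :=
        Reachable.mono (away_le G.1 (bB G)) (rp_reach _ v)
      exact Tst_closed_reach hn G hreach hvT

/-- decoding of G from the image graph and T -/
def decG (G'' : SimpleGraph (Fin n)) (T : Set (Fin n)) : SimpleGraph (Fin n) where
  Adj u v := G''.Adj u v ∧ (u ∈ T ↔ v ∈ T)
  symm := ⟨fun u v ⟨h, h'⟩ => ⟨h.symm, h'.symm⟩⟩
  loopless := ⟨fun u ⟨h, _⟩ => G''.irrefl h⟩

lemma decG_spec (hn : 0 < n) (G : BadT n k) (X' : Finset (Fin (n - n / 2))) :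
    decG (GII hn G X') (Tst hn G) = G.1 := by
  ext u v
  show (GII hn G X').Adj u v ∧ (u ∈ Tst hn G ↔ v ∈ Tst hn G) ↔ G.1.Adj u v
  unfold GII
  simp only [sup_adj, fromEdgeSet_adj]
  constructor
  · rintro ⟨hl | ⟨he, hne⟩, hiff⟩
    · exact hl
    · exfalso
      obtain ⟨x, hx, hex⟩ := he
      rw [Sym2.eq_iff] at hex
      have hxT : x ∉ Tst hn G := by
        obtain ⟨i, _, rfl⟩ := Finset.mem_image.1 hx
        exact tcEmb_not_T hn G i
      rcases hex with ⟨h1, h2⟩ | ⟨h1, h2⟩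
      · rw [← h1, ← h2] at hiff
        exact hxT (hiff.1 (bOne_mem_T hn G))
      · rw [← h1, ← h2] at hiff
        exact hxT (hiff.2 (bOne_mem_T hn G))
  · intro hadj
    exact ⟨Or.inl hadj, Tst_mem_iff_of_adj hn G hadj⟩

/-- decoding of X from the image graph, b₁ and T -/
lemma X_spec (hn : 0 < n) (G : BadT n k) (X' : Finset (Fin (n - n / 2))) (x : Fin n) :
    ((GII hn G X').Adj (bOne hn G) x ∧ x ∉ Tst hn G) ↔ x ∈ Xf hn G X' := by
  unfold GII
  simp only [sup_adj, fromEdgeSet_adj]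
  constructor
  · rintro ⟨hl | ⟨he, hne⟩, hxT⟩
    · exact absurd (Tst_closed hn G _ _ (bOne_mem_T hn G) hl) hxT
    · obtain ⟨y, hy, hey⟩ := he
      rw [Sym2.eq_iff] at hey
      rcases hey with ⟨h1, h2⟩ | ⟨h1, h2⟩
      · rw [← h2]
        simpa using hy
      · exact absurd (h1 ▸ bOne_mem_T hn G) hxT
  · intro hx
    have hxT : x ∉ Tst hn G := by
      obtain ⟨i, _, rfl⟩ := Finset.mem_image.1 hx
      exact tcEmb_not_T hn G i
    exact ⟨Or.inr ⟨⟨x, by simpa using hx, rfl⟩,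
      fun hcontra => hxT (hcontra ▸ bOne_mem_T hn G)⟩, hxT⟩


lemma PhiII_injective (hn : 0 < n) : Function.Injective (PhiII (n := n) (k := k) hn) := by
  rintro ⟨⟨G₁, hr₁⟩, X₁⟩ ⟨⟨G₂, hr₂⟩, X₂⟩ himg
  have h0 : GII hn G₁ X₁ = GII hn G₂ X₂ := congrArg (fun t => t.1.1) himg
  have hB : bB G₁ = bB G₂ := by
    have := congrArg (fun t => t.2.1) himg
    exact congrArg Subtype.val (encodeSmall_injective this)
  have hBT : BTf hn G₁ = BTf hn G₂ := by
    have := congrArg (fun t => t.2.2.1) himg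
    exact congrArg Subtype.val (encodeSmall_injective this)
  have hb1 : bOne hn G₁ = bOne hn G₂ := congrArg (fun t => t.2.2.2.1) himg
  have hc4 : c4f hn G₁ = c4f hn G₂ := congrArg (fun t => t.2.2.2.2) himg
  have hT : Tst hn G₁ = Tst hn G₂ := by
    have h1 := decT_spec hn G₁ hr₁ X₁
    have h2 := decT_spec hn G₂ hr₂ X₂
    rw [← h1, ← h2, h0, hB, hBT, hc4]
  have hG : G₁ = G₂ := by
    apply Subtype.ext
    have h1 := decG_spec hn G₁ X₁
    have h2 := decG_spec hn G₂ X₂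
    rw [← h1, ← h2, h0, hT]
  subst hG
  have hX : Xf hn G₁ X₁ = Xf hn G₁ X₂ := by
    ext x
    rw [← X_spec hn G₁ X₁ x, ← X_spec hn G₁ X₂ x, h0]
  have : X₁ = X₂ := by
    apply Finset.image_injective (tcEmb_injective hn G₁)
    exact hX
  rw [this]

/-! ## Regime I -/

variable (n k) in
abbrev DomI := {G : BadT n k // ¬ (cW G < 2 * (n / 8 + 1))} ×
  (Fin (n / 8 + 1) → Fin (n / 8 + 1))

variable (n k) in
abbrev TgtI := ApexT n k × (Fin k → Fin (n + 1)) × Finset (Fin n)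

noncomputable def wIso (G : BadT n k) :
    Fin (cW G) ≃o {x // x ∈ WS (away G.1 (bB G)) (bB G)} :=
  (WS (away G.1 (bB G)) (bB G)).orderIsoOfFin rfl

noncomputable def sRt (G : BadT n k) (hreg : 2 * (n / 8 + 1) ≤ cW G)
    (i : Fin (n / 8 + 1)) : Fin n :=
  ((wIso G ⟨(n / 8 + 1) + (i : ℕ), by have := i.2; omega⟩ : {x // x ∈ _}) : Fin n)

noncomputable def tRt (G : BadT n k) (hreg : 2 * (n / 8 + 1) ≤ cW G)
    (g : Fin (n / 8 + 1) → Fin (n / 8 + 1)) (i : Fin (n / 8 + 1)) : Fin n :=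
  ((wIso G ⟨((g i) : ℕ), by have := (g i).2; omega⟩ : {x // x ∈ _}) : Fin n)

lemma sRt_mem (G : BadT n k) (hreg) (i) :
    sRt G hreg i ∈ WS (away G.1 (bB G)) (bB G) := (wIso G _).2

lemma tRt_mem (G : BadT n k) (hreg) (g) (i) :
    tRt G hreg g i ∈ WS (away G.1 (bB G)) (bB G) := (wIso G _).2

lemma wIso_coe_inj (G : BadT n k) {a b : Fin (cW G)}
    (h : ((wIso G a : {x // x ∈ _}) : Fin n) = ((wIso G b : {x // x ∈ _}) : Fin n)) : a = b :=
  (wIso G).injective (Subtype.ext h)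

lemma sRt_inj (G : BadT n k) (hreg) {i j} (h : sRt G hreg i = sRt G hreg j) : i = j := by
  have := wIso_coe_inj G h
  have h2 := congrArg Fin.val this
  simp only at h2
  exact Fin.ext (by omega)

lemma sRt_ne_tRt (G : BadT n k) (hreg) (g) (i j) : sRt G hreg i ≠ tRt G hreg g j := by
  intro h
  have := wIso_coe_inj G h
  have h2 := congrArg Fin.val this
  simp only at h2
  have := (g j).2
  omega

noncomputable def EI (G : BadT n k) (hreg : 2 * (n / 8 + 1) ≤ cW G)
    (g : Fin (n / 8 + 1) → Fin (n / 8 + 1)) : Set (Sym2 (Fin n)) :=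
  Set.range (fun i => s(sRt G hreg i, tRt G hreg g i))

noncomputable def GDI (G : BadT n k) (hreg : 2 * (n / 8 + 1) ≤ cW G)
    (g : Fin (n / 8 + 1) → Fin (n / 8 + 1)) : SimpleGraph (Fin n) :=
  G.1 ⊔ fromEdgeSet (EI G hreg g)

lemma GDI_apex (G : BadT n k) (hreg) (g) : ApexP n k (GDI G hreg g) := by
  refine ⟨bB G, bB_card G, ?_⟩
  apply isBlocker_of_away_acyclic
  unfold GDI
  rw [away_sup_avoid _ _ _ ?hE]
  case hE =>
    rintro e ⟨i, rfl⟩ x hx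
    rw [Sym2.mem_iff] at hx
    rcases hx with rfl | rfl
    · exact WS_away_notB (sRt_mem G hreg i)
    · exact WS_away_notB (tRt_mem G hreg g i)
  exact isAcyclic_sup_star _ _ (away_acyclic_of_blocker (bB_blocker G))
    (fun i j hne => WS_not_reach (sRt_mem G hreg i) (sRt_mem G hreg j)
      (fun h => hne (sRt_inj G hreg h)))
    (fun i j => WS_not_reach (sRt_mem G hreg i) (tRt_mem G hreg g j)
      (sRt_ne_tRt G hreg g i j))

noncomputable def PhiI : DomI n k → TgtI n k := fun p =>
  (⟨GDI p.1.1 (le_of_not_gt p.1.2) p.2, GDI_apex p.1.1 (le_of_not_gt p.1.2) p.2⟩,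
   encodeSmall k ⟨bB p.1.1, bB_card p.1.1⟩,
   WS (away p.1.1.1 (bB p.1.1)) (bB p.1.1))

def decGI (G'' : SimpleGraph (Fin n)) (Wf : Finset (Fin n)) : SimpleGraph (Fin n) where
  Adj u v := G''.Adj u v ∧ ¬ (u ∈ Wf ∧ v ∈ Wf)
  symm := ⟨fun u v ⟨h, h'⟩ => ⟨h.symm, fun ⟨a, b⟩ => h' ⟨b, a⟩⟩⟩
  loopless := ⟨fun u ⟨h, _⟩ => G''.irrefl h⟩

lemma decGI_spec (G : BadT n k) (hreg) (g) :
    decGI (GDI G hreg g) (WS (away G.1 (bB G)) (bB G)) = G.1 := by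
  ext u v
  show (GDI G hreg g).Adj u v ∧ ¬ _ ↔ _
  unfold GDI
  simp only [sup_adj, fromEdgeSet_adj]
  constructor
  · rintro ⟨hl | ⟨⟨i, hei⟩, hne⟩, hW⟩
    · exact hl
    · exfalso
      apply hW
      rw [Sym2.eq_iff] at hei
      rcases hei with ⟨h1, h2⟩ | ⟨h1, h2⟩
      · rw [← h1, ← h2]
        exact ⟨sRt_mem G hreg i, tRt_mem G hreg g i⟩
      · rw [← h1, ← h2]
        exact ⟨tRt_mem G hreg g i, sRt_mem G hreg i⟩
  · intro hadj
    refine ⟨Or.inl hadj, ?_⟩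
    rintro ⟨h1, h2⟩
    exact WS_away_not_adj h1 h2 hadj.ne hadj

lemma tval_spec (G : BadT n k) (hreg) (g) (i : Fin (n / 8 + 1)) (x : Fin n) :
    ((GDI G hreg g).Adj (sRt G hreg i) x ∧ x ∈ WS (away G.1 (bB G)) (bB G))
      ↔ x = tRt G hreg g i := by
  unfold GDI
  simp only [sup_adj, fromEdgeSet_adj]
  constructor
  · rintro ⟨hl | ⟨⟨j, hej⟩, hne⟩, hW⟩
    · exfalso
      exact WS_away_not_adj (sRt_mem G hreg i) hW hl.ne hl
    · rw [Sym2.eq_iff] at hej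
      rcases hej with ⟨h1, h2⟩ | ⟨h1, h2⟩
      · have : j = i := sRt_inj G hreg h1
        rw [← h2, this]
      · exact absurd h2.symm (sRt_ne_tRt G hreg g i j)
  · rintro rfl
    refine ⟨Or.inr ⟨⟨i, rfl⟩, sRt_ne_tRt G hreg g i i⟩, tRt_mem G hreg g i⟩

lemma PhiI_injective : Function.Injective (PhiI (n := n) (k := k)) := by
  rintro ⟨⟨G₁, hr₁⟩, g₁⟩ ⟨⟨G₂, hr₂⟩, g₂⟩ himg
  have h0 : GDI G₁ (le_of_not_gt hr₁) g₁ = GDI G₂ (le_of_not_gt hr₂) g₂ :=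
    congrArg (fun t => t.1.1) himg
  have hB : bB G₁ = bB G₂ := by
    have := congrArg (fun t => t.2.1) himg
    exact congrArg Subtype.val (encodeSmall_injective this)
  have hW : WS (away G₁.1 (bB G₁)) (bB G₁) = WS (away G₂.1 (bB G₂)) (bB G₂) :=
    congrArg (fun t => t.2.2) himg
  have hG : G₁ = G₂ := by
    apply Subtype.ext
    have h1 := decGI_spec G₁ (le_of_not_gt hr₁) g₁
    have h2 := decGI_spec G₂ (le_of_not_gt hr₂) g₂
    rw [← h1, ← h2, h0, hW]
  subst hG
  have hg : g₁ = g₂ := by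
    funext i
    have h1 := (tval_spec G₁ (le_of_not_gt hr₁) g₁ i (tRt G₁ (le_of_not_gt hr₁) g₂ i)).1
    have h2 : tRt G₁ (le_of_not_gt hr₁) g₂ i = tRt G₁ (le_of_not_gt hr₁) g₁ i := by
      apply h1
      rw [h0]
      exact (tval_spec G₁ (le_of_not_gt hr₂) g₂ i _).2 rfl
    have h3 := wIso_coe_inj G₁ h2.symm
    have h4 := congrArg Fin.val h3
    simp only at h4
    exact Fin.ext (by omega)
  rw [hg]

end Main

section Count
variable (n k : ℕ)

lemma card_apexT : Nat.card (ApexT n k) = apexCount n k :=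
  Nat.card_congr (Equiv.subtypeEquivRight (fun _ => Iff.rfl))

lemma card_badT_split :
    Nat.card (BadT n k) ≤ Nat.card {G : BadT n k // cW G < 2 * (n / 8 + 1)}
      + Nat.card {G : BadT n k // ¬ (cW G < 2 * (n / 8 + 1))} := by
  classical
  rw [← Nat.card_sum]
  apply Nat.card_le_card_of_injective
    (fun G : BadT n k => if h : cW G < 2 * (n / 8 + 1) then Sum.inl ⟨G, h⟩ else Sum.inr ⟨G, h⟩)
  intro a b hab
  dsimp only at hab
  split_ifs at hab with h1 h2 h2 <;> simp_all

lemma cardII_le (hn : 0 < n) :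
    Nat.card {G : BadT n k // cW G < 2 * (n / 8 + 1)} * 2 ^ (n - n / 2)
      ≤ apexCount n k * ((n + 1) ^ k * ((n + 1) ^ k * (n * 2 ^ (2 * (n / 8 + 1))))) := by
  classical
  have h1 : Nat.card (DomII n k)
      = Nat.card {G : BadT n k // cW G < 2 * (n / 8 + 1)} * 2 ^ (n - n / 2) := by
    rw [Nat.card_prod]
    congr 1
    rw [Nat.card_eq_fintype_card, Fintype.card_finset, Fintype.card_fin]
  have h2 : Nat.card (TgtII n k)
      = apexCount n k * ((n + 1) ^ k * ((n + 1) ^ k * (n * 2 ^ (2 * (n / 8 + 1))))) := by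
    rw [Nat.card_prod, Nat.card_prod, Nat.card_prod, Nat.card_prod, card_apexT]
    congr 1
    congr 1
    · rw [Nat.card_eq_fintype_card, Fintype.card_fun, Fintype.card_fin, Fintype.card_fin]
    congr 1
    · rw [Nat.card_eq_fintype_card, Fintype.card_fun, Fintype.card_fin, Fintype.card_fin]
    congr 1
    · rw [Nat.card_eq_fintype_card, Fintype.card_fin]
    · rw [Nat.card_eq_fintype_card, Fintype.card_fun, Fintype.card_fin]
      norm_num
  rw [← h1, ← h2]
  exact Nat.card_le_card_of_injective (PhiII hn) (PhiII_injective hn)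

lemma cardI_le (hn : 0 < n) :
    Nat.card {G : BadT n k // ¬ (cW G < 2 * (n / 8 + 1))} * (n / 8 + 1) ^ (n / 8 + 1)
      ≤ apexCount n k * ((n + 1) ^ k * 2 ^ n) := by
  classical
  have h1 : Nat.card (DomI n k)
      = Nat.card {G : BadT n k // ¬ (cW G < 2 * (n / 8 + 1))} * (n / 8 + 1) ^ (n / 8 + 1) := by
    rw [Nat.card_prod]
    congr 1
    rw [Nat.card_eq_fintype_card, Fintype.card_fun, Fintype.card_fin]
  have h2 : Nat.card (TgtI n k) = apexCount n k * ((n + 1) ^ k * 2 ^ n) := by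
    rw [Nat.card_prod, Nat.card_prod, card_apexT]
    congr 1
    congr 1
    · rw [Nat.card_eq_fintype_card, Fintype.card_fun, Fintype.card_fin, Fintype.card_fin]
    · rw [Nat.card_eq_fintype_card, Fintype.card_finset, Fintype.card_fin]
  rw [← h1, ← h2]
  exact Nat.card_le_card_of_injective PhiI PhiI_injective

end Count
section Arith

lemma log_le_two_sqrt {x : ℝ} (hx : 1 ≤ x) : Real.log x ≤ 2 * Real.sqrt x := by
  have h0 : (0:ℝ) < x := lt_of_lt_of_le one_pos hx
  have hs : Real.log (Real.sqrt x) ≤ Real.sqrt x - 1 :=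
    Real.log_le_sub_one_of_pos (Real.sqrt_pos.2 h0)
  rw [Real.log_sqrt h0.le] at hs
  nlinarith [Real.sqrt_nonneg x]

lemma poly_le_exp_eventually (a : ℕ) (ε : ℝ) (hε : 0 < ε) :
    ∃ n0 : ℕ, ∀ n : ℕ, n0 ≤ n → ((n : ℝ) + 1) ^ a ≤ Real.exp (ε * n) := by
  obtain ⟨n1, hn1⟩ := exists_nat_ge ((3 * (a : ℝ) / ε) ^ 2 + 1)
  refine ⟨n1 + 1, fun n hn => ?_⟩
  have hn1' : ((3 * (a : ℝ) / ε) ^ 2 + 1) ≤ (n : ℝ) := by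
    calc ((3 * (a : ℝ) / ε) ^ 2 + 1) ≤ (n1 : ℝ) := hn1
    _ ≤ n := by exact_mod_cast le_trans (Nat.le_succ n1) hn
  have hnn : (1 : ℝ) ≤ n := by nlinarith [sq_nonneg (3 * (a:ℝ) / ε)]
  have hs : 3 * (a : ℝ) / ε ≤ Real.sqrt n := by
    rw [show (3 * (a:ℝ) / ε) = √((3 * (a:ℝ) / ε)^2) from (Real.sqrt_sq (by positivity)).symm]
    apply Real.sqrt_le_sqrt
    linarith
  have hlog : Real.log ((n : ℝ) + 1) ≤ 3 * Real.sqrt n := by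
    calc Real.log ((n:ℝ) + 1) ≤ 2 * Real.sqrt ((n:ℝ)+1) := log_le_two_sqrt (by linarith)
    _ ≤ 2 * Real.sqrt (2 * n) := by
        apply mul_le_mul_of_nonneg_left (Real.sqrt_le_sqrt (by linarith)) (by norm_num)
    _ = 2 * (Real.sqrt 2 * Real.sqrt n) := by rw [Real.sqrt_mul (by norm_num)]
    _ ≤ 3 * Real.sqrt n := by
        have h2 : Real.sqrt 2 ≤ 1.5 := by
          rw [show (1.5:ℝ) = √(1.5^2) from (Real.sqrt_sq (by norm_num)).symm]
          apply Real.sqrt_le_sqrt; norm_num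
        nlinarith [Real.sqrt_nonneg n]
  have hmain : (a : ℝ) * Real.log ((n:ℝ)+1) ≤ ε * n := by
    have h1 : (a:ℝ) * Real.log ((n:ℝ)+1) ≤ (a:ℝ) * (3 * Real.sqrt n) :=
      mul_le_mul_of_nonneg_left hlog (Nat.cast_nonneg a)
    have hsq : Real.sqrt n * Real.sqrt n = n := Real.mul_self_sqrt (by positivity)
    have h2 : (a:ℝ) * (3 * Real.sqrt n) ≤ ε * n := by
      have key := mul_le_mul_of_nonneg_left hs (by positivity : (0:ℝ) ≤ ε * Real.sqrt n)
      have e1 : (ε * Real.sqrt n) * (3 * a / ε) = (a:ℝ) * (3 * Real.sqrt n) := by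
        field_simp
      have e2 : (ε * Real.sqrt n) * Real.sqrt n = ε * n := by
        rw [mul_assoc, hsq]
      linarith
    linarith
  calc ((n:ℝ)+1)^a = Real.exp (Real.log ((n:ℝ)+1)) ^ a := by
        rw [Real.exp_log (by linarith)]
  _ = Real.exp ((a:ℝ) * Real.log ((n:ℝ)+1)) := by
        rw [← Real.exp_nat_mul]
  _ ≤ Real.exp (ε * n) := Real.exp_le_exp.2 hmain

lemma two_pow_nat_eq_exp (d : ℕ) : ((2:ℝ)) ^ d = Real.exp ((d : ℝ) * Real.log 2) := by
  rw [Real.exp_nat_mul, Real.exp_log (by norm_num)]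

/-- main analytic estimate -/
lemma arith_main (k : ℕ) : ∃ n0 : ℕ, ∀ n : ℕ, n0 ≤ n →
    (((n+1)^k * ((n+1)^k * (n * 2^(2*(n/8+1)))) : ℕ) : ℝ) / 2^(n - n/2)
      + (((n+1)^k * 2^n : ℕ) : ℝ) / ((n/8+1 : ℕ) : ℝ)^((n/8+1 : ℕ))
      ≤ Real.exp (-(Real.log 2 / 8) * n) := by
  obtain ⟨na, hna⟩ := poly_le_exp_eventually (2*k+4) (Real.log 2 / 8)
    (by positivity)
  obtain ⟨nb, hnb⟩ := exists_nat_ge (16 * Real.exp (16*((k:ℝ)+4)))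
  refine ⟨max (max na nb) 16, fun n hn => ?_⟩
  have hna' : na ≤ n := le_trans (le_trans (le_max_left _ _) (le_max_left _ _)) hn
  have hnb' : (16 * Real.exp (16*((k:ℝ)+4)) : ℝ) ≤ n := by
    calc (16 * Real.exp (16*((k:ℝ)+4)) : ℝ) ≤ nb := hnb
    _ ≤ n := by exact_mod_cast le_trans (le_trans (le_max_right _ _) (le_max_left _ _)) hn
  have h16 : (16:ℕ) ≤ n := le_trans (le_max_right _ _) hn
  have h16' : (16:ℝ) ≤ n := by exact_mod_cast h16
  have hn1 : (1:ℝ) ≤ n := by linarith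
  have hl2 : (0:ℝ) < Real.log 2 := Real.log_pos (by norm_num)
  set c : ℝ := Real.log 2 / 8 with hc
  have hcpos : 0 < c := by positivity
  have hc1 : c ≤ 1 := by
    rw [hc]
    have := Real.log_le_sub_one_of_pos (by norm_num : (0:ℝ) < 2)
    linarith
  -- Piece 1
  have piece1 : (((n+1)^k * ((n+1)^k * (n * 2^(2*(n/8+1)))) : ℕ) : ℝ) / 2^(n - n/2)
      ≤ Real.exp (-c * n) / 2 := by
    rw [div_le_div_iff₀ (by positivity) (by norm_num)]
    -- goal : M2 * 2 ≤ exp(-c n) * 2^(n - n/2)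
    have hd : Real.exp ((Real.log 2 / 2) * n) ≤ (2:ℝ) ^ (n - n/2) := by
      rw [two_pow_nat_eq_exp]
      apply Real.exp_le_exp.2
      have hdn : n ≤ 2 * (n - n/2) := by omega
      have : (n:ℝ) ≤ 2 * ((n - n/2 : ℕ) : ℝ) := by exact_mod_cast hdn
      nlinarith
    have h2Q : ((2:ℝ))^(2*(n/8+1)) ≤ 4 * Real.exp ((Real.log 2 / 4) * n) := by
      rw [two_pow_nat_eq_exp]
      have hq : (2*(n/8+1) : ℕ) ≤ n/4 + 2 := by omega
      have hq' : ((2*(n/8+1) : ℕ) : ℝ) * Real.log 2 ≤ ((n:ℝ)/4 + 2) * Real.log 2 := by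
        apply mul_le_mul_of_nonneg_right _ hl2.le
        calc ((2*(n/8+1) : ℕ) : ℝ) ≤ ((n/4 + 2 : ℕ) : ℝ) := by exact_mod_cast hq
        _ ≤ (n:ℝ)/4 + 2 := by
            push_cast
            have h4 := Nat.div_mul_le_self n 4
            have h4' : ((n/4 : ℕ) : ℝ) * 4 ≤ (n:ℝ) := by exact_mod_cast h4
            linarith
      calc Real.exp (((2*(n/8+1) : ℕ) : ℝ) * Real.log 2) ≤ Real.exp (((n:ℝ)/4 + 2) * Real.log 2) :=
            Real.exp_le_exp.2 hq'
      _ = Real.exp (2 * Real.log 2) * Real.exp ((Real.log 2/4) * n) := by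
            rw [← Real.exp_add]; ring_nf
      _ = 4 * Real.exp ((Real.log 2/4) * n) := by
            rw [show (2:ℝ) * Real.log 2 = Real.log 2 + Real.log 2 by ring, Real.exp_add,
              Real.exp_log (by norm_num : (0:ℝ) < 2)]
            norm_num
    have hpoly : ((n:ℝ)+1)^(2*k+4) ≤ Real.exp (c * n) := hna n hna'
    -- assemble
    have hM2 : (((n+1)^k * ((n+1)^k * (n * 2^(2*(n/8+1)))) : ℕ) : ℝ) * 2
        ≤ ((n:ℝ)+1)^(2*k+4) * Real.exp ((Real.log 2/4) * n) := by
      push_cast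
      have hb1 : ((n:ℝ)+1)^k * ((n:ℝ)+1)^k * ((n:ℝ)+1) = ((n:ℝ)+1)^(2*k+1) := by
        rw [← pow_add, ← pow_succ]
        congr 1
        omega
      have hb2 : ((n:ℝ)+1)^(2*k+1) * 8 ≤ ((n:ℝ)+1)^(2*k+4) := by
        have : ((n:ℝ)+1)^(2*k+4) = ((n:ℝ)+1)^(2*k+1) * ((n:ℝ)+1)^3 := by
          rw [← pow_add]
        rw [this]
        apply mul_le_mul_of_nonneg_left _ (by positivity)
        calc (8:ℝ) = 2^3 := by norm_num
        _ ≤ ((n:ℝ)+1)^3 := pow_le_pow_left₀ (by norm_num) (by linarith) 3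
      calc ((n:ℝ)+1)^k * (((n:ℝ)+1)^k * ((n:ℝ) * (2:ℝ)^(2*(n/8+1)))) * 2
          ≤ ((n:ℝ)+1)^k * (((n:ℝ)+1)^k * (((n:ℝ)+1) * (4 * Real.exp ((Real.log 2/4) * n)))) * 2 := by
            have h4pos : (0:ℝ) ≤ 4 * Real.exp ((Real.log 2/4) * n) := by positivity
            gcongr <;> first | linarith | exact h2Q
      _ = (((n:ℝ)+1)^k * ((n:ℝ)+1)^k * ((n:ℝ)+1)) * 8 * Real.exp ((Real.log 2/4) * n) := by ring
      _ = ((n:ℝ)+1)^(2*k+1) * 8 * Real.exp ((Real.log 2/4) * n) := by rw [hb1]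
      _ ≤ ((n:ℝ)+1)^(2*k+4) * Real.exp ((Real.log 2/4) * n) := by
            apply mul_le_mul_of_nonneg_right hb2 (by positivity)
    calc (((n+1)^k * ((n+1)^k * (n * 2^(2*(n/8+1)))) : ℕ) : ℝ) * 2
        ≤ ((n:ℝ)+1)^(2*k+4) * Real.exp ((Real.log 2/4) * n) := hM2
    _ ≤ Real.exp (c * n) * Real.exp ((Real.log 2/4) * n) := by
        apply mul_le_mul_of_nonneg_right hpoly (by positivity)
    _ ≤ Real.exp (-c * n) * (2:ℝ)^(n - n/2) := by
        have : Real.exp (c*n) * Real.exp ((Real.log 2/4) * n)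
            = Real.exp (-c * n) * Real.exp ((Real.log 2/2) * n) := by
          rw [← Real.exp_add, ← Real.exp_add]
          congr 1
          rw [hc]
          ring
        rw [this]
        apply mul_le_mul_of_nonneg_left hd (by positivity)
  -- Piece 2
  have piece2 : (((n+1)^k * 2^n : ℕ) : ℝ) / ((n/8+1 : ℕ) : ℝ)^((n/8+1 : ℕ))
      ≤ Real.exp (-c * n) / 2 := by
    have hQpos : (0:ℝ) < ((n/8+1 : ℕ) : ℝ) := by positivity
    rw [div_le_div_iff₀ (by positivity) (by norm_num)]
    -- M1 * 2 ≤ exp(-c n) * Q^Q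
    have hlhs : (((n+1)^k * 2^n : ℕ) : ℝ) * 2 ≤ Real.exp (((k:ℝ)+3) * n) := by
      push_cast
      have e1 : ((n:ℝ)+1)^k ≤ Real.exp ((k:ℝ) * n) := by
        calc ((n:ℝ)+1)^k ≤ (Real.exp n)^k := by
              apply pow_le_pow_left₀ (by positivity)
              linarith [Real.add_one_le_exp (n:ℝ)]
        _ = Real.exp ((k:ℝ) * n) := by rw [← Real.exp_nat_mul]
      have e2 : (2:ℝ)^n ≤ Real.exp ((n:ℝ)) := by
        calc (2:ℝ)^n ≤ (Real.exp 1)^n := by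
              apply pow_le_pow_left₀ (by norm_num)
              linarith [Real.add_one_le_exp (1:ℝ)]
        _ = Real.exp ((n:ℝ)) := by rw [← Real.exp_nat_mul]; ring_nf
      have e3 : (2:ℝ) ≤ Real.exp ((n:ℝ)) := by
        have := Real.add_one_le_exp (n:ℝ)
        linarith
      calc ((n:ℝ)+1)^k * 2^n * 2 ≤ Real.exp ((k:ℝ)*n) * Real.exp (n:ℝ) * Real.exp (n:ℝ) := by
            gcongr
      _ = Real.exp ((k:ℝ)*n + n + n) := by rw [← Real.exp_add, ← Real.exp_add]
      _ ≤ Real.exp (((k:ℝ)+3) * n) := by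
            apply Real.exp_le_exp.2
            nlinarith
    have hrhs : Real.exp (((k:ℝ)+3) * n + c * n) ≤ ((n/8+1 : ℕ) : ℝ)^((n/8+1 : ℕ)) := by
      have hQn : (n:ℝ)/16 ≤ ((n/8+1 : ℕ) : ℝ) := by
        push_cast
        have : ((n/8 : ℕ) : ℝ) ≥ ((n:ℝ) - 7)/8 := by
          have h8 : (8:ℕ) * (n/8) + 7 ≥ n := by omega
          have : ((8:ℝ)) * ((n/8 : ℕ) : ℝ) + 7 ≥ (n:ℝ) := by exact_mod_cast h8
          linarith
        linarith
      have hQbig : Real.exp (16*((k:ℝ)+4)) ≤ ((n/8+1 : ℕ) : ℝ) := by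
        have h' : Real.exp (16*((k:ℝ)+4)) ≤ (n:ℝ)/16 := by linarith
        exact le_trans h' hQn
      have hlogQ : 16*((k:ℝ)+4) ≤ Real.log ((n/8+1 : ℕ) : ℝ) := by
        have := Real.log_le_log (Real.exp_pos _) hQbig
        rwa [Real.log_exp] at this
      have hQQ : ((n/8+1 : ℕ) : ℝ)^((n/8+1 : ℕ)) = Real.exp (((n/8+1 : ℕ):ℝ) * Real.log ((n/8+1 : ℕ):ℝ)) := by
        rw [Real.exp_nat_mul, Real.exp_log hQpos]
      rw [hQQ]
      apply Real.exp_le_exp.2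
      have hnn : (0:ℝ) ≤ (n:ℝ) := Nat.cast_nonneg n
      calc ((k:ℝ)+3) * n + c * n = (((k:ℝ)+3) + c) * n := by ring
      _ ≤ ((k:ℝ)+4) * n := by nlinarith
      _ = ((n:ℝ)/16) * (16*((k:ℝ)+4)) := by ring
      _ ≤ ((n/8+1 : ℕ):ℝ) * Real.log ((n/8+1 : ℕ):ℝ) := by
          apply mul_le_mul hQn hlogQ (by positivity) (by positivity)
    calc (((n+1)^k * 2^n : ℕ) : ℝ) * 2 ≤ Real.exp (((k:ℝ)+3) * n) := hlhs
    _ = Real.exp (-c * n) * Real.exp (((k:ℝ)+3) * n + c * n) := by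
        rw [← Real.exp_add]
        congr 1
        ring
    _ ≤ Real.exp (-c * n) * ((n/8+1 : ℕ) : ℝ)^((n/8+1 : ℕ)) :=
        mul_le_mul_of_nonneg_left hrhs (Real.exp_pos _).le
  calc _ ≤ Real.exp (-c * n) / 2 + Real.exp (-c * n) / 2 := add_le_add piece1 piece2
  _ = Real.exp (-c * n) := by ring

end Arith

/-- with probability 1 − e^{-Ω(n)}, for a uniformly random graph from
(Apex^k F)_n the graph induced outside a largest component is a forest. -/
theorem stmt_17 (k : ℕ) (hk : 1 ≤ k) :
    ∃ c : ℝ, 0 < c ∧ ∃ n0 : ℕ, ∀ n ≥ n0,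
      (Nat.card {G : SimpleGraph (Fin n) //
          (∃ B : Finset (Fin n), B.card ≤ k ∧ IsBlocker G ↑B) ∧
          ∀ H : G.ConnectedComponent,
            (∀ H' : G.ConnectedComponent, H'.supp.ncard ≤ H.supp.ncard) →
            ¬ (G.induce H.suppᶜ).IsAcyclic} : ℝ)
        ≤ Real.exp (-c * n) * (apexCount n k : ℝ) := by
  obtain ⟨n0', harith⟩ := arith_main k
  have hcpos : (0:ℝ) < Real.log 2 / 8 := by
    have := Real.log_pos (by norm_num : (1:ℝ) < 2)
    linarith
  refine ⟨Real.log 2 / 8, hcpos, max n0' 1, fun n hn => ?_⟩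
  have hn1 : 1 ≤ n := le_trans (le_max_right _ _) hn
  have hn0 : n0' ≤ n := le_trans (le_max_left _ _) hn
  have hpos : 0 < n := hn1
  have hident : Nat.card {G : SimpleGraph (Fin n) //
      (∃ B : Finset (Fin n), B.card ≤ k ∧ IsBlocker G ↑B) ∧
      ∀ H : G.ConnectedComponent,
        (∀ H' : G.ConnectedComponent, H'.supp.ncard ≤ H.supp.ncard) →
        ¬ (G.induce H.suppᶜ).IsAcyclic} = Nat.card (BadT n k) :=
    Nat.card_congr (Equiv.subtypeEquivRight fun _ => Iff.rfl)
  rw [hident]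
  have hsplit := card_badT_split n k
  have h2 := cardII_le (n := n) (k := k) hpos
  have h1 := cardI_le (n := n) (k := k) hpos
  set b2 := Nat.card {G : BadT n k // cW G < 2 * (n / 8 + 1)} with hb2def
  set b1 := Nat.card {G : BadT n k // ¬ (cW G < 2 * (n / 8 + 1))} with hb1def
  set A := apexCount n k with hAdef
  have e2 : (b2 : ℝ) ≤ (A : ℝ) *
      ((((n+1)^k * ((n+1)^k * (n * 2^(2*(n/8+1)))) : ℕ) : ℝ) / 2^(n - n/2)) := by
    have h := (Nat.cast_le (α := ℝ)).2 h2
    rw [Nat.cast_mul, Nat.cast_mul, Nat.cast_pow] at h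
    rw [← le_div_iff₀ (by positivity : (0:ℝ) < ((2:ℕ):ℝ)^(n - n/2))] at h
    calc (b2 : ℝ) ≤ (A : ℝ) * (((n+1)^k * ((n+1)^k * (n * 2^(2*(n/8+1)))) : ℕ) : ℝ)
        / ((2:ℕ):ℝ)^(n - n/2) := h
    _ = (A : ℝ) * ((((n+1)^k * ((n+1)^k * (n * 2^(2*(n/8+1)))) : ℕ) : ℝ) / 2^(n - n/2)) := by
        push_cast
        ring
  have e1 : (b1 : ℝ) ≤ (A : ℝ) *
      ((((n+1)^k * 2^n : ℕ) : ℝ) / ((n/8+1 : ℕ) : ℝ)^((n/8+1 : ℕ))) := by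
    have h := (Nat.cast_le (α := ℝ)).2 h1
    rw [Nat.cast_mul, Nat.cast_mul, Nat.cast_pow] at h
    rw [← le_div_iff₀ (by positivity : (0:ℝ) < ((n/8+1 : ℕ):ℝ)^((n/8+1 : ℕ)))] at h
    calc (b1 : ℝ) ≤ (A : ℝ) * (((n+1)^k * 2^n : ℕ) : ℝ) / ((n/8+1 : ℕ):ℝ)^((n/8+1 : ℕ)) := h
    _ = (A : ℝ) * ((((n+1)^k * 2^n : ℕ) : ℝ) / ((n/8+1 : ℕ) : ℝ)^((n/8+1 : ℕ))) := by ring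
  calc (Nat.card (BadT n k) : ℝ) ≤ ((b2 + b1 : ℕ) : ℝ) := by exact_mod_cast hsplit
  _ = (b2 : ℝ) + (b1 : ℝ) := by push_cast; ring
  _ ≤ (A : ℝ) * ((((n+1)^k * ((n+1)^k * (n * 2^(2*(n/8+1)))) : ℕ) : ℝ) / 2^(n - n/2))
      + (A : ℝ) * ((((n+1)^k * 2^n : ℕ) : ℝ) / ((n/8+1 : ℕ) : ℝ)^((n/8+1 : ℕ))) :=
      add_le_add e2 e1
  _ = (A : ℝ) * ((((n+1)^k * ((n+1)^k * (n * 2^(2*(n/8+1)))) : ℕ) : ℝ) / 2^(n - n/2)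
      + (((n+1)^k * 2^n : ℕ) : ℝ) / ((n/8+1 : ℕ) : ℝ)^((n/8+1 : ℕ))) := by ring
  _ ≤ (A : ℝ) * Real.exp (-(Real.log 2 / 8) * n) :=
      mul_le_mul_of_nonneg_left (harith n hn0) (Nat.cast_nonneg A)
  _ = Real.exp (-(Real.log 2 / 8) * n) * (A : ℝ) := mul_comm _ _
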